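/- Let ℓ = (ℓ₁, ..., ℓₙ) ∈ ℤⁿ and A ∈ GL_n(ℤ). Define h : SU(2) × Tⁿ → SU(2) × Tⁿ by h(u, φ) = (R(ℓ·φ)·u, A·φ) where φ ∈ Tⁿ = ℝⁿ/ℤⁿ, ℓ·φ ∈ ℝ/ℤ is well-defined, R(θ) = diag(e^{2πiθ}, e^{−2πiθ}) ∈ SU(2), and A·φ denotes the induced action of A on Tⁿ. Then h is a homeomorphism, and for any g ∈ SU(2) of the form g = R(θ₀) and ψ ∈ Tⁿ, h conjugates the left translation by (R(θ₀), ψ) to the left translation by (R(θ₀ + ℓ·ψ), A·ψ): namely h ∘ L_{(R(θ₀),ψ)} = L_{(R(θ₀+ℓ·ψ), A·ψ)} ∘ h. -/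

import Mathlib

open Matrix ComplexConjugate

/-- `SU(2)`, realized as the subgroup of the unitary group `U(2)` of matrices of
determinant `1`. -/
noncomputable def SU2 : Subgroup (Matrix.unitaryGroup (Fin 2) ℂ) where
  carrier := {A | (A : Matrix (Fin 2) (Fin 2) ℂ).det = 1}
  one_mem' := by simp
  mul_mem' := by
    intro a b ha hb
    simp only [Set.mem_setOf_eq] at *
    rw [Submonoid.coe_mul, Matrix.det_mul, ha, hb, one_mul]
  inv_mem' := by
    intro a ha
    simp only [Set.mem_setOf_eq] at *
    have h1 : ((a⁻¹ * a : Matrix.unitaryGroup (Fin 2) ℂ) : Matrix (Fin 2) (Fin 2) ℂ) = 1 := by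
      rw [inv_mul_cancel]; rfl
    have := congrArg Matrix.det h1
    rw [Submonoid.coe_mul, Matrix.det_mul, ha, mul_one, Matrix.det_one] at this
    exact this

/-- The diagonal matrix `R(θ) = diag (z, z̄)` as an element of `SU(2)`, for `z` on the
unit circle (multiplicative model of `ℝ/ℤ`). -/
noncomputable def Rdiag (z : Circle) : SU2 :=
  ⟨⟨Matrix.diagonal ![(z : ℂ), conj (z : ℂ)], by
      rw [Matrix.mem_unitaryGroup_iff, Matrix.star_eq_conjTranspose,
        Matrix.diagonal_conjTranspose, Matrix.diagonal_mul_diagonal]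
      have hv : (fun i => ![(z : ℂ), conj (z : ℂ)] i * star ![(z : ℂ), conj (z : ℂ)] i)
          = fun _ => (1 : ℂ) := by
        funext i
        fin_cases i <;> simp [Complex.mul_conj, mul_comm]
      rw [hv]
      exact Matrix.diagonal_one⟩,
    by
      show (Matrix.diagonal ![(z : ℂ), conj (z : ℂ)]).det = 1
      rw [Matrix.det_diagonal]
      simp [Fin.prod_univ_two, Complex.mul_conj]⟩

/- ## Auxiliary lemmas -/

lemma SU2.coe_continuous_iff {X : Type*} [TopologicalSpace X] (f : X → SU2) :
    Continuous f ↔ Continuous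
      (fun x => ((f x : Matrix.unitaryGroup (Fin 2) ℂ) : Matrix (Fin 2) (Fin 2) ℂ)) := by
  rw [Topology.IsInducing.subtypeVal.continuous_iff, Topology.IsInducing.subtypeVal.continuous_iff]
  rfl

lemma Rdiag_mul (a b : Circle) : Rdiag (a * b) = Rdiag a * Rdiag b := by
  apply Subtype.ext; apply Subtype.ext
  show Matrix.diagonal _ = Matrix.diagonal _ * Matrix.diagonal _
  rw [Matrix.diagonal_mul_diagonal]
  have hv : ![((a*b : Circle) : ℂ), conj ((a*b : Circle) : ℂ)]
      = fun i => ![(a:ℂ), conj (a:ℂ)] i * ![(b:ℂ), conj (b:ℂ)] i := by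
    funext i; fin_cases i <;> simp
  rw [hv]

lemma Rdiag_one : Rdiag 1 = 1 := by
  apply Subtype.ext; apply Subtype.ext
  show Matrix.diagonal _ = (1 : Matrix (Fin 2) (Fin 2) ℂ)
  have hv : ![((1:Circle) : ℂ), conj ((1:Circle) : ℂ)] = fun _ : Fin 2 => (1:ℂ) := by
    funext i; fin_cases i <;> simp
  rw [hv, Matrix.diagonal_one]

lemma Rdiag_continuous : Continuous Rdiag := by
  rw [SU2.coe_continuous_iff]
  show Continuous fun z : Circle => Matrix.diagonal ![(z : ℂ), conj (z : ℂ)]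
  apply continuous_pi; intro i; apply continuous_pi; intro j
  simp only [Matrix.diagonal]
  fin_cases i <;> fin_cases j <;> simp [Matrix.of_apply] <;>
    first
      | exact continuous_const
      | exact continuous_subtype_val
      | exact continuous_star.comp continuous_subtype_val

lemma SU2.continuous_mul' {X : Type*} [TopologicalSpace X] {f g : X → SU2}
    (hf : Continuous f) (hg : Continuous g) : Continuous (fun x => f x * g x) := by
  rw [SU2.coe_continuous_iff] at hf hg ⊢
  exact hf.mul hg

/-- `x ↦ x ^ (∑ f)` as a finite product of `zpow`s. -/
lemma circle_zpow_sum {ι : Type*} (a : Circle) (s : Finset ι) (f : ι → ℤ) :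
    a ^ (∑ i ∈ s, f i) = ∏ i ∈ s, a ^ f i := by
  classical
  induction s using Finset.cons_induction with
  | empty => simp
  | cons i s hi ih => rw [Finset.sum_cons, Finset.prod_cons, _root_.zpow_add, ih]

/-- The action of an integer matrix on the torus. -/
noncomputable def torusZMap {n : ℕ} (A : Matrix (Fin n) (Fin n) ℤ)
    (φ : Fin n → Circle) : Fin n → Circle :=
  fun i => ∏ j, φ j ^ A i j

lemma torusZMap_comp {n : ℕ} (A B : Matrix (Fin n) (Fin n) ℤ) (φ : Fin n → Circle) :
    torusZMap A (torusZMap B φ) = torusZMap (A * B) φ := by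
  funext i
  simp only [torusZMap]
  calc ∏ j, (∏ k, φ k ^ B j k) ^ A i j
      = ∏ j, ∏ k, φ k ^ (B j k * A i j) := by
        refine Finset.prod_congr rfl fun j _ => ?_
        rw [← Finset.prod_zpow]
        exact Finset.prod_congr rfl fun k _ => by rw [_root_.zpow_mul]
    _ = ∏ k, ∏ j, φ k ^ (B j k * A i j) := Finset.prod_comm
    _ = ∏ k, φ k ^ ((A * B) i k) := by
        refine Finset.prod_congr rfl fun k _ => ?_
        rw [Matrix.mul_apply, circle_zpow_sum]
        exact Finset.prod_congr rfl fun j _ => by rw [mul_comm]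

lemma torusZMap_one {n : ℕ} (φ : Fin n → Circle) : torusZMap (1 : Matrix (Fin n) (Fin n) ℤ) φ = φ := by
  classical
  funext i
  simp only [torusZMap, Matrix.one_apply]
  have hv : ∀ j, φ j ^ (if i = j then (1:ℤ) else 0) = if i = j then φ j else 1 := by
    intro j; split <;> simp
  simp [hv]

lemma torusZMap_continuous {n : ℕ} (A : Matrix (Fin n) (Fin n) ℤ) :
    Continuous (torusZMap A) :=
  continuous_pi fun i => continuous_finset_prod _ fun j _ => (continuous_apply j).zpow _

lemma torusZMap_mulmap {n : ℕ} (A : Matrix (Fin n) (Fin n) ℤ) (ψ φ : Fin n → Circle) :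
    torusZMap A (ψ * φ) = torusZMap A ψ * torusZMap A φ := by
  funext i
  simp [torusZMap, Pi.mul_apply, mul_zpow, Finset.prod_mul_distrib]

/-- Sufficiency (case `+1`) of the topologically conjugate classification on
`SU(2) × Tⁿ`: for `ℓ ∈ ℤⁿ` and `A ∈ GL_n(ℤ)`, the map
`h (u, φ) = (R(ℓ·φ)·u, A·φ)` is a homeomorphism of `SU(2) × Tⁿ` conjugating the left
translation by `(R(θ₀), ψ)` to the left translation by `(R(θ₀ + ℓ·ψ), A·ψ)`
(written multiplicatively on the circle). -/
theorem su2_torus_translations_conjugate_plus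
    (n : ℕ) (ℓ : Fin n → ℤ) (A : Matrix (Fin n) (Fin n) ℤ) (hA : IsUnit A.det)
    (θ₀ : Circle) (ψ : Fin n → Circle) :
    ∃ h : (SU2 × (Fin n → Circle)) ≃ₜ (SU2 × (Fin n → Circle)),
      (∀ (u : SU2) (φ : Fin n → Circle),
        h (u, φ) = (Rdiag (∏ j, φ j ^ ℓ j) * u, fun i => ∏ j, φ j ^ A i j)) ∧
      ∀ p : SU2 × (Fin n → Circle),
        h ((Rdiag θ₀, ψ) * p)
          = (Rdiag (θ₀ * ∏ j, ψ j ^ ℓ j), fun i => ∏ j, ψ j ^ A i j) * h p := by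
  classical
  set B := A⁻¹ with hB
  have hBA : B * A = 1 := Matrix.nonsing_inv_mul A hA
  have hAB : A * B = 1 := Matrix.mul_nonsing_inv A hA
  set P : (Fin n → Circle) → Circle := fun φ => ∏ j, φ j ^ ℓ j with hPdef
  have hPcont : Continuous P :=
    continuous_finset_prod _ fun j _ => (continuous_apply j).zpow _
  have hPmul : ∀ ψ φ : Fin n → Circle, P (ψ * φ) = P ψ * P φ := by
    intro ψ φ
    simp [hPdef, Pi.mul_apply, mul_zpow, Finset.prod_mul_distrib]
  refine ⟨⟨⟨fun p => (Rdiag (P p.2) * p.1, torusZMap A p.2),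
      fun p => (Rdiag ((P (torusZMap B p.2))⁻¹) * p.1, torusZMap B p.2), ?_, ?_⟩, ?_, ?_⟩, ?_, ?_⟩
  · rintro ⟨u, φ⟩
    have h2 : torusZMap B (torusZMap A φ) = φ := by rw [torusZMap_comp, hBA, torusZMap_one]
    simp only [h2]
    rw [← mul_assoc, ← Rdiag_mul, inv_mul_cancel, Rdiag_one, one_mul]
  · rintro ⟨u, φ⟩
    have h3 : torusZMap A (torusZMap B φ) = φ := by rw [torusZMap_comp, hAB, torusZMap_one]
    simp only [h3]
    rw [← mul_assoc, ← Rdiag_mul, mul_inv_cancel, Rdiag_one, one_mul]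
  · exact (SU2.continuous_mul'
        (Rdiag_continuous.comp (hPcont.comp continuous_snd)) continuous_fst).prodMk
      ((torusZMap_continuous A).comp continuous_snd)
  · exact (SU2.continuous_mul'
        (Rdiag_continuous.comp ((continuous_inv.comp hPcont).comp
          ((torusZMap_continuous B).comp continuous_snd))) continuous_fst).prodMk
      ((torusZMap_continuous B).comp continuous_snd)
  · intro u φ
    rfl
  · rintro ⟨u, φ⟩
    show (Rdiag (P (ψ * φ)) * (Rdiag θ₀ * u), torusZMap A (ψ * φ))
        = (Rdiag (θ₀ * P ψ) * (Rdiag (P φ) * u), (fun i => ∏ j, ψ j ^ A i j) * torusZMap A φ)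
    refine Prod.ext ?_ ?_
    · show Rdiag (P (ψ * φ)) * (Rdiag θ₀ * u) = Rdiag (θ₀ * P ψ) * (Rdiag (P φ) * u)
      rw [hPmul, ← mul_assoc, ← mul_assoc, ← Rdiag_mul, ← Rdiag_mul]
      congr 2
      rw [mul_comm (P ψ * P φ) θ₀, mul_assoc]
    · show torusZMap A (ψ * φ) = (fun i => ∏ j, ψ j ^ A i j) * torusZMap A φ
      rw [torusZMap_mulmap]
      rfl
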